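/- Let (A, m) be a local noetherian ring. Every bounded cochain complex of finite free A-modules is quasi-isomorphic to a minimal bounded complex of finite free A-modules. -/

import Mathlib

open CategoryTheory Limits

universe u

section Defs

variable {A : Type u} [Ring A]

/-- The degreewise direct sum of a finite family of cochain complexes of modules. -/
noncomputable def sumComplex {s : ℕ} (G : Fin s → CochainComplex (ModuleCat.{u} A) ℤ) :
    CochainComplex (ModuleCat.{u} A) ℤ where
  X i := ModuleCat.of A (∀ j, (G j).X i)
  d i i' := ModuleCat.ofHom (LinearMap.pi fun j => ((G j).d i i').hom.comp (LinearMap.proj j))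
  shape i i' h := by
    apply ModuleCat.hom_ext
    refine LinearMap.ext fun v => funext fun j => ?_
    simp [(G j).shape i i' h]
    rfl
  d_comp_d' i i' i'' _ _ := by
    apply ModuleCat.hom_ext
    refine LinearMap.ext fun v => funext fun j => ?_
    simp
    exact (congrArg (fun f => f.hom (v j)) ((G j).d_comp_d i i' i'')).trans rfl

/-- A complex is supported in the interval `[a, b]` if it has trivial terms outside. -/
def SupportedIn (K : CochainComplex (ModuleCat.{u} A) ℤ) (a b : ℤ) : Prop :=
  ∀ i : ℤ, (i < a ∨ b < i) → IsZero (K.X i)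

/-- A perfect complex: a bounded cochain complex of finitely generated projective modules. -/
def IsPerfect (K : CochainComplex (ModuleCat.{u} A) ℤ) : Prop :=
  (∀ i : ℤ, Module.Finite A (K.X i) ∧ Module.Projective A (K.X i)) ∧
    ∃ a b : ℤ, SupportedIn K a b

/-- The complex has length at most `r`, i.e. it is supported in an interval `[a, a + r]`. -/
def LengthLE (K : CochainComplex (ModuleCat.{u} A) ℤ) (r : ℕ) : Prop :=
  ∃ a : ℤ, SupportedIn K a (a + r)

/-- Two complexes are quasi-isomorphic (isomorphic in the derived category) iff they are
linked by a roof of quasi-isomorphisms. -/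
def QuasiIsomorphic (K L : CochainComplex (ModuleCat.{u} A) ℤ) : Prop :=
  ∃ (Z : CochainComplex (ModuleCat.{u} A) ℤ) (f : Z ⟶ K) (g : Z ⟶ L),
    QuasiIso f ∧ QuasiIso g

end Defs

/-- A ring is strongly `r`-regular if every perfect complex is quasi-isomorphic to a finite
direct sum of perfect complexes of length at most `r`. -/
def IsStronglyRegularOfOrder (A : Type u) [Ring A] (r : ℕ) : Prop :=
  ∀ K : CochainComplex (ModuleCat.{u} A) ℤ, IsPerfect K →
    ∃ (s : ℕ) (G : Fin s → CochainComplex (ModuleCat.{u} A) ℤ),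
      (∀ j, IsPerfect (G j) ∧ LengthLE (G j) r) ∧ QuasiIsomorphic K (sumComplex G)

/-- A ring is strongly regular if it is strongly `r`-regular for some `r ≥ 0`. -/
def IsStronglyRegular (A : Type u) [Ring A] : Prop :=
  ∃ r : ℕ, IsStronglyRegularOfOrder A r

/-- A bounded complex of finite free modules over a local ring is minimal if its
differentials map into `m` times the target. -/
def IsMinimal {A : Type u} [CommRing A] [IsLocalRing A]
    (P : CochainComplex (ModuleCat.{u} A) ℤ) : Prop :=
  ∀ (i j : ℤ) (v : P.X i),
    P.d i j v ∈ (IsLocalRing.maximalIdeal A) • (⊤ : Submodule A (P.X j))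

/-- A bounded complex of finite free modules. -/
def IsFiniteFreeBounded {A : Type u} [Ring A] (P : CochainComplex (ModuleCat.{u} A) ℤ) : Prop :=
  (∀ i : ℤ, Module.Finite A (P.X i) ∧ Module.Free A (P.X i)) ∧ ∃ a b : ℤ, SupportedIn P a b

section MinimalAux

variable {A : Type u} [CommRing A]

/-- Split a module along a functional admitting a section element. -/
noncomputable def kerSplitEquiv {M : Type u} [AddCommGroup M] [Module A M]
    (ψ : M →ₗ[A] A) (χ : M) (h : ψ χ = 1) :
    M ≃ₗ[A] (LinearMap.ker ψ × A) :=
  LinearEquiv.ofLinear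
    (LinearMap.prod
      (LinearMap.codRestrict _ (LinearMap.id - (LinearMap.toSpanSingleton A M χ).comp ψ)
        (fun m => by simp [LinearMap.mem_ker, h, mul_comm]))
      ψ)
    ((LinearMap.ker ψ).subtype.coprod (LinearMap.toSpanSingleton A M χ))
    (by
      apply LinearMap.ext
      rintro ⟨⟨q, hq⟩, a⟩
      rw [LinearMap.mem_ker] at hq
      refine Prod.ext (Subtype.ext ?_) ?_ <;>
        simp [LinearMap.toSpanSingleton, hq, h])
    (by
      apply LinearMap.ext
      intro m
      simp [LinearMap.toSpanSingleton])

lemma ker_projective {M : Type u} [AddCommGroup M] [Module A M] [Module.Free A M]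
    (ψ : M →ₗ[A] A) (χ : M) (h : ψ χ = 1) : Module.Projective A (LinearMap.ker ψ) := by
  refine Module.Projective.of_split (LinearMap.ker ψ).subtype
    (LinearMap.codRestrict _ (LinearMap.id - (LinearMap.toSpanSingleton A M χ).comp ψ)
      (fun m => by simp [LinearMap.mem_ker, h, mul_comm])) ?_
  apply LinearMap.ext
  rintro ⟨q, hq⟩
  rw [LinearMap.mem_ker] at hq
  exact Subtype.ext (by simp [LinearMap.toSpanSingleton, hq])

lemma ker_finite [IsNoetherianRing A] {M : Type u} [AddCommGroup M] [Module A M]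
    [Module.Finite A M] (ψ : M →ₗ[A] A) : Module.Finite A (LinearMap.ker ψ) :=
  Module.Finite.iff_fg.mpr (IsNoetherian.noetherian _)

lemma ker_free [IsLocalRing A] [IsNoetherianRing A] {M : Type u} [AddCommGroup M] [Module A M]
    [Module.Finite A M] [Module.Free A M] (ψ : M →ₗ[A] A) (χ : M) (h : ψ = 0 ∨ ψ χ = 1) :
    Module.Free A (LinearMap.ker ψ) := by
  rcases h with h | h
  · subst h
    rw [LinearMap.ker_zero]
    exact Module.Free.of_equiv (Submodule.topEquiv).symm
  · haveI := ker_projective ψ χ h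
    haveI := ker_finite ψ
    haveI : Module.FinitePresentation A (LinearMap.ker ψ) :=
      Module.finitePresentation_of_finite A _
    exact Module.free_of_flat_of_isLocalRing

lemma ker_finrank_le [IsLocalRing A] [IsNoetherianRing A] {M : Type u} [AddCommGroup M]
    [Module A M] [Module.Finite A M] [Module.Free A M] (ψ : M →ₗ[A] A) (χ : M)
    (h : ψ = 0 ∨ ψ χ = 1) :
    Module.finrank A (LinearMap.ker ψ) ≤ Module.finrank A M := by
  rcases h with h | h
  · subst h
    rw [LinearMap.ker_zero]
    exact le_of_eq (Submodule.topEquiv.finrank_eq)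
  · haveI := ker_free (A := A) ψ χ (Or.inr h)
    haveI := ker_finite (A := A) ψ
    have := (kerSplitEquiv ψ χ h).finrank_eq
    rw [Module.finrank_prod, Module.finrank_self] at this
    omega

lemma ker_finrank_lt [IsLocalRing A] [IsNoetherianRing A] {M : Type u} [AddCommGroup M]
    [Module A M] [Module.Finite A M] [Module.Free A M] (ψ : M →ₗ[A] A) (χ : M)
    (h : ψ χ = 1) :
    Module.finrank A (LinearMap.ker ψ) < Module.finrank A M := by
  haveI := ker_free (A := A) ψ χ (Or.inr h)
  haveI := ker_finite (A := A) ψ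
  have := (kerSplitEquiv ψ χ h).finrank_eq
  rw [Module.finrank_prod, Module.finrank_self] at this
  omega

lemma exists_functional [IsLocalRing A] {N : Type u} [AddCommGroup N] [Module A N]
    [Module.Finite A N] [Module.Free A N] {e : N}
    (he : e ∉ (IsLocalRing.maximalIdeal A) • (⊤ : Submodule A N)) :
    ∃ φ : N →ₗ[A] A, φ e = 1 := by
  set b := Module.Free.chooseBasis A N with hb
  by_cases hs : ∀ k, b.repr e k ∈ IsLocalRing.maximalIdeal A
  · exfalso
    apply he
    rw [← b.sum_repr e]
    exact Submodule.sum_mem _ fun k _ =>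
      Submodule.smul_mem_smul (hs k) Submodule.mem_top
  · push_neg at hs
    obtain ⟨k, hk⟩ := hs
    obtain ⟨w, hw⟩ := IsLocalRing.notMem_maximalIdeal.mp hk
    refine ⟨((w⁻¹ : Aˣ) : A) • b.coord k, ?_⟩
    simp only [LinearMap.smul_apply, Module.Basis.coord_apply, smul_eq_mul]
    rw [← hw]
    exact Units.inv_mul w

end MinimalAux

section ElimConstr

variable {A : Type u} [CommRing A]
variable (P : CochainComplex (ModuleCat.{u} A) ℤ) (i : ℤ)
variable (φ : P.X (i+1) →ₗ[A] A) (v : P.X i)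


lemma ModuleCat_zero_apply {M N : ModuleCat.{u} A} (x : M) : (0 : M ⟶ N) x = 0 := rfl

noncomputable def psiF (j : ℤ) : P.X j →ₗ[A] A :=
  if hj : j = i + 1 then hj ▸ φ else φ.comp (P.d j (i+1)).hom

noncomputable def chiF (j : ℤ) : P.X j :=
  if hj : j = i then hj ▸ v
  else if hj' : j = i + 1 then hj' ▸ (P.d i (i+1) v) else 0

noncomputable def chixF (j : ℤ) : P.X j :=
  if hj : j = i then hj ▸ v else 0

lemma psiF_i1 : psiF P i φ (i+1) = φ := by
  rw [psiF, dif_pos rfl]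

lemma psiF_i : psiF P i φ i = φ.comp (P.d i (i+1)).hom := by
  rw [psiF, dif_neg (by omega)]

lemma psiF_zero {j : ℤ} (h1 : j ≠ i) (h2 : j ≠ i + 1) : psiF P i φ j = 0 := by
  rw [psiF, dif_neg h2, P.shape j (i+1) (by simp only [ComplexShape.up_Rel]; omega)]
  exact LinearMap.comp_zero φ

lemma chiF_i : chiF P i v i = v := by
  rw [chiF, dif_pos rfl]

lemma chiF_i1 : chiF P i v (i+1) = P.d i (i+1) v := by
  rw [chiF, dif_neg (by omega), dif_pos rfl]

lemma chiF_zero {j : ℤ} (h1 : j ≠ i) (h2 : j ≠ i + 1) : chiF P i v j = 0 := by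
  rw [chiF, dif_neg h1, dif_neg h2]

lemma chixF_i : chixF P i v i = v := by
  rw [chixF, dif_pos rfl]

lemma chixF_zero {j : ℤ} (h1 : j ≠ i) : chixF P i v j = 0 := by
  rw [chixF, dif_neg h1]

lemma psiF_d {j j' : ℤ} (m : P.X j) (hm : psiF P i φ j m = 0) :
    psiF P i φ j' (P.d j j' m) = 0 := by
  by_cases hj' : j' = i + 1
  · subst hj'
    rw [psiF_i1]
    by_cases hj : i = j
    · subst hj
      rw [psiF_i] at hm
      exact hm
    · rw [P.shape j (i+1) (by simp only [ComplexShape.up_Rel]; omega)]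
      simp [ModuleCat_zero_apply]
  · rw [psiF, dif_neg hj', LinearMap.comp_apply]
    rw [show (P.d j' (i+1)) ((P.d j j') m) = (P.d j j' ≫ P.d j' (i+1)) m from rfl,
      P.d_comp_d]
    simp [ModuleCat_zero_apply]

lemma psiF_d_of_ne {j j' : ℤ} (hj : j ≠ i) (m : P.X j) :
    psiF P i φ j' (P.d j j' m) = 0 := by
  by_cases hj' : j' = i + 1
  · subst hj'
    rw [psiF_i1, P.shape j (i+1) (by simp only [ComplexShape.up_Rel]; omega)]
    simp [ModuleCat_zero_apply]
  · rw [psiF, dif_neg hj', LinearMap.comp_apply]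
    rw [show (P.d j' (i+1)) ((P.d j j') m) = (P.d j j' ≫ P.d j' (i+1)) m from rfl,
      P.d_comp_d]
    simp [ModuleCat_zero_apply]

lemma psiF_chiF (hφ : φ (P.d i (i+1) v) = 1) (j : ℤ) :
    psiF P i φ j = 0 ∨ psiF P i φ j (chiF P i v j) = 1 := by
  by_cases hj : i = j
  · subst hj
    right
    rw [psiF_i, chiF_i, LinearMap.comp_apply]
    exact hφ
  · by_cases hj' : j = i + 1
    · subst hj'
      right
      rw [psiF_i1, chiF_i1]
      exact hφ
    · exact Or.inl (psiF_zero P i φ (Ne.symm hj) hj')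

lemma key3 (hφ : φ (P.d i (i+1) v) = 1) (j j' : ℤ) (m : P.X j) :
    psiF P i φ j' (P.d j j' m) • chiF P i v j'
      = psiF P i φ j m • (P.d j j') (chiF P i v j) := by
  by_cases hj : i = j
  · subst hj
    by_cases hj' : j' = i + 1
    · subst hj'
      rw [chiF_i1, chiF_i, psiF_i1, psiF_i, LinearMap.comp_apply]
    · rw [P.shape i j' (by simp only [ComplexShape.up_Rel]; omega)]
      simp [ModuleCat_zero_apply]
  · rw [psiF_d_of_ne P i φ (Ne.symm hj), zero_smul]
    by_cases hj2 : j = i + 1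
    · subst hj2
      rw [chiF_i1]
      rw [show (P.d (i+1) j') ((P.d i (i+1)) v) = (P.d i (i+1) ≫ P.d (i+1) j') v from rfl,
        P.d_comp_d]
      simp [ModuleCat_zero_apply]
    · rw [chiF_zero P i v (Ne.symm hj) hj2]
      simp

lemma key4 (hφ : φ (P.d i (i+1) v) = 1) (j : ℤ) (m : P.X j) :
    psiF P i φ j m • chiF P i v j
      = psiF P i φ (j+1) (P.d j (j+1) m) • chixF P i v j
        + psiF P i φ j m • (P.d (j-1) j) (chixF P i v (j-1)) := by
  by_cases hj : i = j
  · subst hj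
    rw [chiF_i, chixF_i, psiF_i1, psiF_i, LinearMap.comp_apply,
      chixF_zero P i v (by omega : i - 1 ≠ i)]
    simp
  · by_cases hj2 : j = i + 1
    · subst hj2
      rw [chiF_i1, psiF_i1, chixF_zero P i v (by omega : i + 1 ≠ i),
        show (i + 1 - 1 : ℤ) = i from by ring, chixF_i, smul_zero, zero_add]
    · rw [chiF_zero P i v (Ne.symm hj) hj2, chixF_zero P i v (Ne.symm hj),
        chixF_zero P i v (by omega : j - 1 ≠ i)]
      simp


noncomputable def elimQ : CochainComplex (ModuleCat.{u} A) ℤ where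
  X j := ModuleCat.of A (LinearMap.ker (psiF P i φ j))
  d j j' := ModuleCat.ofHom ((P.d j j').hom.restrict
    (p := LinearMap.ker (psiF P i φ j)) (q := LinearMap.ker (psiF P i φ j'))
    (fun m hm => by
      rw [LinearMap.mem_ker] at hm ⊢
      exact psiF_d P i φ m hm))
  shape j j' h := by
    ext m
    obtain ⟨m, hm⟩ := m
    show (P.d j j') m = (0 : P.X j')
    rw [P.shape j j' h]
    rfl
  d_comp_d' j j' j'' _ _ := by
    ext m
    obtain ⟨m, hm⟩ := m
    show (P.d j' j'') ((P.d j j') m) = (0 : P.X j'')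
    rw [show (P.d j' j'') ((P.d j j') m) = (P.d j j' ≫ P.d j' j'') m
      from rfl, P.d_comp_d]
    rfl

noncomputable def elimI : elimQ P i φ ⟶ P where
  f j := ModuleCat.ofHom (LinearMap.ker (psiF P i φ j)).subtype
  comm' j j' _ := rfl

noncomputable def elimR (hφ : φ (P.d i (i+1) v) = 1) : P ⟶ elimQ P i φ where
  f j := ModuleCat.ofHom (LinearMap.codRestrict (LinearMap.ker (psiF P i φ j))
    (LinearMap.id - (LinearMap.toSpanSingleton A _ (chiF P i v j)).comp (psiF P i φ j))
    (fun m => by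
      rw [LinearMap.mem_ker]
      rcases psiF_chiF P i φ v hφ j with h | h
      · simp [h]
      · simp [LinearMap.toSpanSingleton_apply, h]))
  comm' j j' _ := by
    ext m
    apply Subtype.ext
    show (P.d j j') (m - psiF P i φ j m • chiF P i v j)
      = (P.d j j') m - psiF P i φ j' ((P.d j j') m) • chiF P i v j'
    rw [map_sub, map_smul, ← key3 P i φ v hφ j j' m]

lemma elimIR (hφ : φ (P.d i (i+1) v) = 1) :
    elimI P i φ ≫ elimR P i φ v hφ = 𝟙 (elimQ P i φ) := by
  ext j m
  obtain ⟨m, hm⟩ := m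
  rw [LinearMap.mem_ker] at hm
  apply Subtype.ext
  show m - psiF P i φ j m • chiF P i v j = m
  rw [hm, zero_smul, sub_zero]

noncomputable def elimHtpy (hφ : φ (P.d i (i+1) v) = 1) :
    Homotopy ((elimR P i φ v hφ) ≫ (elimI P i φ)) (𝟙 P) where
  hom p q := if h : q + 1 = p then
      -(ModuleCat.ofHom ((LinearMap.toSpanSingleton A _ (chixF P i v q)).comp (psiF P i φ p)))
    else 0
  zero p q h := dif_neg (by simpa using h)
  comm p := by
    rw [dNext_eq _ (show (ComplexShape.up ℤ).Rel p (p+1) from rfl),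
        prevD_eq _ (show (ComplexShape.up ℤ).Rel (p-1) p from by simp),
        dif_pos rfl, dif_pos (show p - 1 + 1 = p from by ring)]
    ext m
    have h1 : ((elimR P i φ v hφ ≫ elimI P i φ).f p) m
        = m - psiF P i φ p m • chiF P i v p := rfl
    rw [h1]
    rw [Preadditive.comp_neg, Preadditive.neg_comp]
    show m - psiF P i φ p m • chiF P i v p
      = -(psiF P i φ (p+1) ((P.d p (p+1)) m) • chixF P i v p)
        + -((P.d (p-1) p) (psiF P i φ p m • chixF P i v (p-1))) + m
    rw [map_smul, key4 P i φ v hφ p m]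
    abel



noncomputable def elimHtpyEquiv (hφ : φ (P.d i (i+1) v) = 1) : HomotopyEquiv (elimQ P i φ) P :=
  ⟨elimI P i φ, elimR P i φ v hφ, Homotopy.ofEq (elimIR P i φ v hφ), elimHtpy P i φ v hφ⟩

lemma elimI_quasiIso (hφ : φ (P.d i (i+1) v) = 1) : QuasiIso (elimI P i φ) :=
  (inferInstance : QuasiIso (elimHtpyEquiv P i φ v hφ).hom)

lemma subsingleton_of_isZero {M : ModuleCat.{u} A} (h : IsZero M) : Subsingleton M :=
  ⟨fun x y => by
    have h0 : (𝟙 M : M ⟶ M) = 0 := h.eq_of_src _ _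
    have hx : x = (0 : M ⟶ M) x := by rw [← h0]; rfl
    have hy : y = (0 : M ⟶ M) y := by rw [← h0]; rfl
    rw [hx, hy]
    rfl⟩


end ElimConstr


section ElimStep

lemma elim_step {A : Type u} [CommRing A] [IsLocalRing A] [IsNoetherianRing A] {a b : ℤ}
    (P : CochainComplex (ModuleCat.{u} A) ℤ)
    (hfree : ∀ j : ℤ, Module.Finite A (P.X j) ∧ Module.Free A (P.X j))
    (hsupp : SupportedIn P a b) (hmin : ¬ IsMinimal P) :
    ∃ (Q : CochainComplex (ModuleCat.{u} A) ℤ) (ι : Q ⟶ P),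
      (∀ j : ℤ, Module.Finite A (Q.X j) ∧ Module.Free A (Q.X j)) ∧ SupportedIn Q a b ∧
      QuasiIso ι ∧
      (∑ j ∈ Finset.Icc a b, Module.finrank A (Q.X j)) <
        ∑ j ∈ Finset.Icc a b, Module.finrank A (P.X j) := by
  rw [IsMinimal] at hmin
  push_neg at hmin
  obtain ⟨i, j, v, hv⟩ := hmin
  have hij : j = i + 1 := by
    by_contra hne
    rw [P.shape i j (by simp only [ComplexShape.up_Rel]; omega)] at hv
    exact hv (by rw [ModuleCat_zero_apply]; exact Submodule.zero_mem _)
  subst hij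
  haveI := (hfree (i+1)).1
  haveI := (hfree (i+1)).2
  obtain ⟨φ, hφ⟩ := exists_functional (A := A) (e := P.d i (i+1) v) hv
  refine ⟨elimQ P i φ, elimI P i φ, fun j => ?_, fun j hj => ?_,
    elimI_quasiIso P i φ v hφ, ?_⟩
  · haveI := (hfree j).1
    haveI := (hfree j).2
    exact ⟨ker_finite _, ker_free _ (chiF P i v j) (psiF_chiF P i φ v hφ j)⟩
  · haveI : Subsingleton (P.X j) := subsingleton_of_isZero (hsupp j hj)
    haveI : Subsingleton ((elimQ P i φ).X j) := by
      show Subsingleton (LinearMap.ker (psiF P i φ j))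
      infer_instance
    exact ModuleCat.isZero_of_subsingleton _
  · have hib : a ≤ i ∧ i ≤ b := by
      by_contra hc
      haveI : Subsingleton (P.X i) := subsingleton_of_isZero (hsupp i (by omega))
      apply hv
      rw [Subsingleton.elim v 0, map_zero]
      exact Submodule.zero_mem _
    refine Finset.sum_lt_sum (fun j hj => ?_) ⟨i, Finset.mem_Icc.mpr hib, ?_⟩
    · haveI := (hfree j).1
      haveI := (hfree j).2
      exact ker_finrank_le _ (chiF P i v j) (psiF_chiF P i φ v hφ j)
    · haveI := (hfree i).1
      haveI := (hfree i).2
      refine ker_finrank_lt (psiF P i φ i) (chiF P i v i) ?_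
      rw [chiF_i, psiF_i, LinearMap.comp_apply]
      exact hφ

end ElimStep


/-- Over a local noetherian ring, every bounded cochain complex of finite
free modules is quasi-isomorphic to a minimal bounded complex of finite free modules. -/
theorem statement6 (A : Type u) [CommRing A] [IsLocalRing A] [IsNoetherianRing A]
    (P : CochainComplex (ModuleCat.{u} A) ℤ) (hP : IsFiniteFreeBounded P) :
    ∃ Q : CochainComplex (ModuleCat.{u} A) ℤ,
      IsFiniteFreeBounded Q ∧ IsMinimal Q ∧ QuasiIsomorphic P Q := by
  obtain ⟨hfree, a, b, hsupp⟩ := hP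
  suffices h : ∀ (n : ℕ) (R : CochainComplex (ModuleCat.{u} A) ℤ),
      (∀ j : ℤ, Module.Finite A (R.X j) ∧ Module.Free A (R.X j)) → SupportedIn R a b →
      (∑ j ∈ Finset.Icc a b, Module.finrank A (R.X j)) ≤ n →
      ∃ Q : CochainComplex (ModuleCat.{u} A) ℤ,
        IsFiniteFreeBounded Q ∧ IsMinimal Q ∧ QuasiIsomorphic R Q by
    exact h _ P hfree hsupp le_rfl
  intro n
  induction n with
  | zero =>
    intro R hfreeR hsuppR hsum
    by_cases hmin : IsMinimal R
    · exact ⟨R, ⟨hfreeR, a, b, hsuppR⟩, hmin, R, 𝟙 R, 𝟙 R, inferInstance, inferInstance⟩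
    · obtain ⟨Q, ι, h1, h2, h3, h4⟩ := elim_step R hfreeR hsuppR hmin
      omega
  | succ n ih =>
    intro R hfreeR hsuppR hsum
    by_cases hmin : IsMinimal R
    · exact ⟨R, ⟨hfreeR, a, b, hsuppR⟩, hmin, R, 𝟙 R, 𝟙 R, inferInstance, inferInstance⟩
    · obtain ⟨Q, ι, h1, h2, h3, h4⟩ := elim_step R hfreeR hsuppR hmin
      obtain ⟨Q', hQ'1, hQ'2, Z, f, g, hf, hg⟩ := ih Q h1 h2 (by omega)
      haveI := hf
      haveI := h3
      exact ⟨Q', hQ'1, hQ'2, Z, f ≫ ι, g, inferInstance, hg⟩
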